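/- arXiv:2112.11905 — 4 statements merged into one kernel-verified Lean document; each statement's English description precedes it below -/
import Mathlib

section
/- Let X and Y be metric spaces, C ≥ 0, λ ≥ 1, and let f : X → Y be a map such that lip f(x) ≤ C for every x ∈ X. If X is λ-quasiconvex, then f is (Cλ)-Lipschitz. -/
open Set Metric Filter MeasureTheory
open scoped ENNReal NNReal

noncomputable section

/-- The real Hilbert space `ℓ₂(I)`. -/
abbrev L2 (I : Type*) := lp (fun _ : I => ℝ) 2

/-- The standard unit vector `e_i ∈ ℓ₂(I)`. -/
noncomputable def stdVec {I : Type*} (i : I) : L2 I :=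
  letI := Classical.decEq I; lp.single 2 i 1

/-- The (closed) face of the full complex `Σ(I)` spanned by the vertices `e_i`, `i ∈ s`:
the convex hull of the corresponding standard unit vectors. -/
def faceSet {I : Type*} (s : Finset I) : Set (L2 I) := convexHull ℝ (stdVec '' (s : Set I))

/-- `x` lies in the relative interior of the face spanned by `s`. -/
def memRelInt {I : Type*} (s : Finset I) (x : L2 I) : Prop :=
  x ∈ faceSet s ∧ ∀ i ∈ s, 0 < x i

/-- A subcomplex of the full complex `Σ(I)`, encoded by the collection of the vertex sets of
its faces: a nonempty collection of finite nonempty subsets of `I`, closed under passing to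
nonempty subsets. -/
structure IsSubcomplex {I : Type*} (F : Set (Finset I)) : Prop where
  nonempty : F.Nonempty
  faces_nonempty : ∀ s ∈ F, s.Nonempty
  down_closed : ∀ s ∈ F, ∀ t : Finset I, t.Nonempty → t ⊆ s → t ∈ F

/-- The underlying set `|Σ| ⊆ ℓ₂(I)` of a (sub)complex: the union of its faces. -/
def cpxCarrier {I : Type*} (F : Set (Finset I)) : Set (L2 I) := ⋃ s ∈ F, faceSet s

/-- The open star of the face with vertex set `s` in the complex `F`: the union of the
relative interiors of all faces of `F` containing it. -/
def openStar {I : Type*} (F : Set (Finset I)) (s : Finset I) : Set (L2 I) :=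
  ⋃ t ∈ F, ⋃ (_ : s ⊆ t), {x | memRelInt t x}

/-- The smallest subcomplex of `F` whose underlying set contains `A`
(encoded by its collection of faces). -/
def hullFaces {I : Type*} (F : Set (Finset I)) (A : Set (L2 I)) : Set (Finset I) :=
  ⋂₀ {G : Set (Finset I) | G ⊆ F ∧ IsSubcomplex G ∧ A ⊆ cpxCarrier G}

/-- The pointwise (lower) Lipschitz constant at `x` of the restriction of `f` to `S`:
`liminf_{s → 0+} s⁻¹ · sup { d(f x, f y) : y ∈ S, d(x,y) < s }`, valued in `ℝ≥0∞`. -/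
noncomputable def lipWithin {X Y : Type*} [PseudoMetricSpace X] [PseudoMetricSpace Y]
    (f : X → Y) (S : Set X) (x : X) : ℝ≥0∞ :=
  Filter.liminf
    (fun s : ℝ => (⨆ y ∈ S ∩ Metric.ball x s, edist (f x) (f y)) / ENNReal.ofReal s)
    (nhdsWithin 0 (Set.Ioi 0))

/-- The pointwise (lower) Lipschitz constant `lip f (x)`, valued in `ℝ≥0∞`. -/
noncomputable def plip {X Y : Type*} [PseudoMetricSpace X] [PseudoMetricSpace Y]
    (f : X → Y) (x : X) : ℝ≥0∞ := lipWithin f Set.univ x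

/-- A subset `S` of a metric space is `c`-quasiconvex: any two of its points are joined by a
continuous curve in `S` of length (total variation) at most `c` times their distance. -/
def QuasiconvexSet {X : Type*} [PseudoMetricSpace X] (S : Set X) (c : ℝ) : Prop :=
  ∀ x ∈ S, ∀ y ∈ S, ∃ γ : ℝ → X, ContinuousOn γ (Set.Icc 0 1) ∧
    Set.MapsTo γ (Set.Icc 0 1) S ∧ γ 0 = x ∧ γ 1 = y ∧
    eVariationOn γ (Set.Icc 0 1) ≤ ENNReal.ofReal (c * dist x y)

/-- The intrinsic (length) metric of `S`: the infimal length of continuous curves in `S`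
joining `x` and `y`, valued in `ℝ≥0∞` (with `inf ∅ = ∞`). -/
noncomputable def intrinsicDist {X : Type*} [PseudoMetricSpace X] (S : Set X) (x y : X) : ℝ≥0∞ :=
  ⨅ (γ : ℝ → X) (_ : ContinuousOn γ (Set.Icc 0 1) ∧ Set.MapsTo γ (Set.Icc 0 1) S ∧
      γ 0 = x ∧ γ 1 = y),
    eVariationOn γ (Set.Icc 0 1)

/-- `X` has Nagata dimension `≤ n` with constant `c`: for every `s > 0` there is a covering of
`X` by sets of diameter `≤ c·s` such that every set of diameter `≤ s` meets at most `n + 1`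
members of the covering. -/
def NagataDimLE (X : Type*) [PseudoMetricSpace X] (n : ℕ) (c : ℝ) : Prop :=
  ∀ s : ℝ, 0 < s → ∃ B : Set (Set X),
    (∀ x : X, ∃ b ∈ B, x ∈ b) ∧
    (∀ b ∈ B, EMetric.diam b ≤ ENNReal.ofReal (c * s)) ∧
    (∀ A : Set X, EMetric.diam A ≤ ENNReal.ofReal s →
      {b | b ∈ B ∧ (b ∩ A).Nonempty}.encard ≤ (n : ℕ∞) + 1)

/-- `Y` is Lipschitz `k`-connected with constant `lam`: for `0 ≤ m ≤ k`, every `L`-Lipschitz map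
from the unit sphere `S^m ⊆ ℝ^{m+1}` to `Y` extends to a `lam·L`-Lipschitz map on the closed
unit ball `B^{m+1}`. -/
def LipschitzConnectedWith (Y : Type*) [PseudoMetricSpace Y] (k : ℕ) (lam : ℝ) : Prop :=
  ∀ m : ℕ, m ≤ k → ∀ L : ℝ, 0 < L →
    ∀ f : EuclideanSpace ℝ (Fin (m + 1)) → Y,
      LipschitzOnWith (Real.toNNReal L) f (Metric.sphere 0 1) →
      ∃ g : EuclideanSpace ℝ (Fin (m + 1)) → Y,
        LipschitzOnWith (Real.toNNReal (lam * L)) g (Metric.closedBall 0 1) ∧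
        Set.EqOn f g (Metric.sphere 0 1)

end


section Aux

open Set Metric Filter Topology
open scoped ENNReal

private lemma stmt1_key {X Y : Type*} [MetricSpace X] [MetricSpace Y] {C : ℝ} (hC : 0 ≤ C)
    (f : X → Y) (hf : ∀ x : X, plip f x ≤ ENNReal.ofReal C)
    {a : ℝ} (ha : C < a) (x : X) {δ : ℝ} (hδ : 0 < δ) :
    ∃ s : ℝ, 0 < s ∧ s < δ ∧ ∀ y : X, dist x y < s →
      edist (f x) (f y) ≤ ENNReal.ofReal (a * s) := by
  have h1 : plip f x < ENNReal.ofReal a :=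
    lt_of_le_of_lt (hf x) ((ENNReal.ofReal_lt_ofReal_iff (hC.trans_lt ha)).2 ha)
  rw [plip, lipWithin] at h1
  have h2 := Filter.frequently_lt_of_liminf_lt (h := h1)
  have h3 : Set.Ioo (0:ℝ) δ ∈ 𝓝[>] (0:ℝ) :=
    Ioo_mem_nhdsGT_of_mem ⟨le_rfl, hδ⟩
  obtain ⟨s, hs1, hs2⟩ := (h2.and_eventually (eventually_of_mem h3 (fun _ h => h))).exists
  refine ⟨s, hs2.1, hs2.2, fun y hy => ?_⟩
  have h4 : (⨆ y ∈ (Set.univ : Set X) ∩ Metric.ball x s, edist (f x) (f y))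
      < ENNReal.ofReal a * ENNReal.ofReal s := by
    refine (ENNReal.div_lt_iff (Or.inl ?_) (Or.inl ?_)).1 hs1
    · simp only [ne_eq, ENNReal.ofReal_eq_zero, not_le]; exact hs2.1
    · exact ENNReal.ofReal_ne_top
  rw [← ENNReal.ofReal_mul (hC.trans ha.le)] at h4
  exact le_trans (le_iSup₂ (f := fun y (_ : y ∈ (Set.univ : Set X) ∩ Metric.ball x s) =>
    edist (f x) (f y)) y ⟨trivial, mem_ball'.2 hy⟩) h4.le

private lemma stmt1_cont {X Y : Type*} [MetricSpace X] [MetricSpace Y] (f : X → Y)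
    {a₀ : ℝ} (h0 : 0 ≤ a₀)
    (hkey : ∀ x : X, ∀ δ : ℝ, 0 < δ → ∃ s : ℝ, 0 < s ∧ s < δ ∧ ∀ y : X, dist x y < s →
      edist (f x) (f y) ≤ ENNReal.ofReal (a₀ * s)) : Continuous f := by
  rw [Metric.continuous_iff]
  intro x ε hε
  obtain ⟨s, hs0, hsδ, hs⟩ := hkey x (ε / (a₀ + 1)) (by positivity)
  refine ⟨s, hs0, fun y hy => ?_⟩
  have h1 := hs y (by rwa [dist_comm])
  have h2 : dist (f x) (f y) ≤ a₀ * s := by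
    have h := (edist_dist (f x) (f y)) ▸ h1
    rwa [ENNReal.ofReal_le_ofReal_iff (by positivity)] at h
  rw [dist_comm] at h2
  have h3 : a₀ * s ≤ a₀ * (ε / (a₀ + 1)) := by
    rcases eq_or_lt_of_le h0 with h'|h'
    · simp [← h']
    · exact (mul_le_mul_iff_right₀ h').2 hsδ.le
  have h4 : a₀ * (ε / (a₀ + 1)) < ε := by
    rw [mul_div_assoc', div_lt_iff₀ (by positivity)]
    nlinarith
  linarith

private lemma stmt1_chain {X Y : Type*} [MetricSpace X] [MetricSpace Y]
    (f : X → Y) (hfc : Continuous f)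
    {a₀ a ε : ℝ} (h0 : 0 ≤ a₀) (haa : a₀ < a) (hε : 0 < ε)
    (hkey : ∀ x : X, ∀ δ : ℝ, 0 < δ → ∃ s, 0 < s ∧ s < δ ∧ ∀ y, dist x y < s →
      edist (f x) (f y) ≤ ENNReal.ofReal (a₀ * s))
    (γ : ℝ → X) (hγ : ContinuousOn γ (Icc 0 1)) :
    edist (f (γ 0)) (f (γ 1)) ≤
      ENNReal.ofReal a * eVariationOn γ (Icc 0 1) + ENNReal.ofReal ε := by
  have ha : 0 < a := h0.trans_lt haa
  set v : ℝ → ℝ≥0∞ := fun t => eVariationOn γ (Icc 0 1 ∩ Icc 0 t) with hv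
  set ψ : ℝ → ℝ≥0∞ := fun t => edist (f (γ 0)) (f (γ t)) with hψ
  have hψc : ContinuousOn ψ (Icc 0 1) :=
    (continuous_const.edist hfc).comp_continuousOn hγ
  have hvmono : ∀ {t₁ t₂ : ℝ}, t₁ ≤ t₂ → v t₁ ≤ v t₂ := fun h =>
    eVariationOn.mono γ (inter_subset_inter_right _ (Icc_subset_Icc_right h))
  set A : Set ℝ := {t ∈ Icc (0:ℝ) 1 | ψ t ≤ ENNReal.ofReal a * v t + ENNReal.ofReal (ε * t)} with hA
  have hA0 : (0:ℝ) ∈ A := by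
    refine ⟨⟨le_rfl, zero_le_one⟩, ?_⟩
    simp [hψ]
  have hAne : A.Nonempty := ⟨0, hA0⟩
  have hAbdd : BddAbove A := ⟨1, fun t ht => ht.1.2⟩
  set T := sSup A with hT
  have hT0 : 0 ≤ T := le_csSup hAbdd hA0
  have hT1 : T ≤ 1 := csSup_le hAne fun t ht => ht.1.2
  have hTIcc : T ∈ Icc (0:ℝ) 1 := ⟨hT0, hT1⟩
  -- T ∈ A
  have hTA : T ∈ A := by
    obtain ⟨u, -, hu_tend, hu_mem⟩ := exists_seq_tendsto_sSup hAne hAbdd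
    refine ⟨hTIcc, ?_⟩
    have huIcc : ∀ n, u n ∈ Icc (0:ℝ) 1 := fun n => (hu_mem n).1
    have huT : ∀ n, u n ≤ T := fun n => le_csSup hAbdd (hu_mem n)
    have h1 : Tendsto (fun n => ψ (u n)) atTop (𝓝 (ψ T)) := by
      refine ((hψc T hTIcc).tendsto).comp ?_
      exact tendsto_nhdsWithin_of_tendsto_nhds_of_eventually_within _ hu_tend
        (Eventually.of_forall huIcc)
    have h2 : Tendsto (fun n => ENNReal.ofReal a * v T + ENNReal.ofReal (ε * u n)) atTop
        (𝓝 (ENNReal.ofReal a * v T + ENNReal.ofReal (ε * T))) := by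
      refine Tendsto.const_add _ ?_
      exact (ENNReal.continuous_ofReal.tendsto _).comp (hu_tend.const_mul ε)
    refine le_of_tendsto_of_tendsto' h1 h2 fun n => ?_
    exact ((hu_mem n).2).trans (add_le_add (mul_le_mul_right (hvmono (huT n)) _) le_rfl)
  -- T = 1
  have hTeq : T = 1 := by
    by_contra h
    have hTlt : T < 1 := lt_of_le_of_ne hT1 h
    -- pick c
    set c : ℝ := max (1/2) (a₀ / a) with hc
    have hc0 : 0 < c := lt_max_of_lt_left one_half_pos
    have hc1 : c < 1 := max_lt one_half_lt_one ((div_lt_one ha).2 haa)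
    have hac : a₀ ≤ a * c := by
      calc a₀ = a * (a₀ / a) := by field_simp
      _ ≤ a * c := by gcongr; exact le_max_right _ _
    obtain ⟨s, hs0, hsδ, hball⟩ := hkey (γ T) (ε * (1 - T) / (a₀ + 1)) (div_pos (mul_pos hε (by linarith)) (by linarith))
    have hss : a₀ * s ≤ ε * (1 - T) := by
      have h1 : a₀ * s ≤ a₀ * (ε * (1 - T) / (a₀ + 1)) := by
        rcases eq_or_lt_of_le h0 with h'|h'
        · simp [← h']
        · exact (mul_le_mul_iff_right₀ h').2 hsδ.le
      have h2 : a₀ * (ε * (1 - T) / (a₀ + 1)) ≤ ε * (1 - T) := by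
        rw [mul_div_assoc'] at *
        rw [div_le_iff₀ (by positivity)]
        nlinarith [mul_pos hε (sub_pos.2 hTlt)]
      linarith
    set g : ℝ → ℝ := fun t => dist (γ T) (γ t) with hg
    have hgc : ContinuousOn g (Icc T 1) :=
      (continuous_const.dist continuous_id).comp_continuousOn
        (hγ.mono (Icc_subset_Icc hT0 le_rfl))
    set E : Set ℝ := Icc T 1 ∩ g ⁻¹' (Ici (c * s)) with hE
    have hEclosed : IsClosed E :=
      hgc.preimage_isClosed_of_isClosed isClosed_Icc isClosed_Ici
    rcases E.eq_empty_or_nonempty with hEe | hEne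
    · -- everything stays in the ball; 1 ∈ A
      have h1E : (1:ℝ) ∉ E := hEe ▸ notMem_empty 1
      have hg1 : g 1 < c * s := by
        by_contra hcon
        exact h1E ⟨⟨hTlt.le, le_rfl⟩, not_lt.1 hcon⟩
      have hglt : dist (γ T) (γ 1) < s :=
        hg1.trans_le (by nlinarith)
      have hb := hball (γ 1) hglt
      have h1A : (1:ℝ) ∈ A := by
        refine ⟨⟨zero_le_one, le_rfl⟩, ?_⟩
        calc ψ 1 ≤ ψ T + edist (f (γ T)) (f (γ 1)) := edist_triangle _ _ _
        _ ≤ (ENNReal.ofReal a * v T + ENNReal.ofReal (ε * T)) + ENNReal.ofReal (ε * (1 - T)) := by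
            exact add_le_add hTA.2 (hb.trans (ENNReal.ofReal_le_ofReal hss))
        _ = ENNReal.ofReal a * v T + ENNReal.ofReal (ε * 1) := by
            rw [add_assoc, ← ENNReal.ofReal_add (by positivity) (by nlinarith)]
            ring_nf
        _ ≤ ENNReal.ofReal a * v 1 + ENNReal.ofReal (ε * 1) := by
            exact add_le_add (mul_le_mul_right (hvmono hT1) _) le_rfl
      have := le_csSup hAbdd h1A
      linarith
    · -- t' = sInf E gives a point strictly beyond T in A
      have hEbdd : BddBelow E := ⟨T, fun t ht => ht.1.1⟩
      set t' := sInf E with ht'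
      have ht'E : t' ∈ E := hEclosed.csInf_mem hEne hEbdd
      have hTt' : T ≤ t' := ht'E.1.1
      have ht'1 : t' ≤ 1 := ht'E.1.2
      have hgt' : c * s ≤ g t' := ht'E.2
      have hTnE : T ∉ E := by
        intro hTE
        have : g T = 0 := by simp [hg]
        have h2 : c * s ≤ g T := hTE.2
        nlinarith
      have hTlt' : T < t' := lt_of_le_of_ne hTt' (fun h => hTnE (h ▸ ht'E))
      -- left limit: g t' ≤ c * s
      have hgle : g t' ≤ c * s := by
        have hcl : t' ∈ closure (Ico T t') := by
          rw [closure_Ico hTlt'.ne]; exact ⟨hTt', le_rfl⟩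
        have hne : (𝓝[Ico T t'] t').NeBot := mem_closure_iff_nhdsWithin_neBot.1 hcl
        have htend : Tendsto g (𝓝[Ico T t'] t') (𝓝 (g t')) :=
          ((hgc t' ⟨hTt', ht'1⟩).mono fun t ht => ⟨ht.1, ht.2.le.trans ht'1⟩)
        refine le_of_tendsto htend (eventually_nhdsWithin_of_forall fun t ht => ?_)
        by_contra hcon
        have htE : t ∈ E := ⟨⟨ht.1, ht.2.le.trans ht'1⟩, le_of_not_ge hcon⟩
        exact absurd (csInf_le hEbdd htE) (not_le.2 ht.2)
      have hglt : dist (γ T) (γ t') < s := hgle.trans_lt (by nlinarith)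
      have hb : edist (f (γ T)) (f (γ t')) ≤ ENNReal.ofReal a * edist (γ T) (γ t') := by
        refine (hball (γ t') hglt).trans ?_
        rw [edist_dist, ← ENNReal.ofReal_mul ha.le]
        refine ENNReal.ofReal_le_ofReal ?_
        calc a₀ * s ≤ (a * c) * s := by nlinarith
        _ = a * (c * s) := by ring
        _ ≤ a * dist (γ T) (γ t') := by nlinarith
      have hedist : edist (γ T) (γ t') ≤ eVariationOn γ (Icc 0 1 ∩ Icc T t') :=
        eVariationOn.edist_le γ ⟨⟨hT0, hT1⟩, le_rfl, hTt'⟩ ⟨⟨hT0.trans hTt', ht'1⟩, hTt', le_rfl⟩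
      have hadd : v T + eVariationOn γ (Icc 0 1 ∩ Icc T t') = v t' :=
        eVariationOn.Icc_add_Icc γ hT0 hTt' hTIcc
      have ht'A : t' ∈ A := by
        refine ⟨⟨hT0.trans hTt', ht'1⟩, ?_⟩
        calc ψ t' ≤ ψ T + edist (f (γ T)) (f (γ t')) := edist_triangle _ _ _
        _ ≤ (ENNReal.ofReal a * v T + ENNReal.ofReal (ε * T)) +
            ENNReal.ofReal a * eVariationOn γ (Icc 0 1 ∩ Icc T t') :=
          add_le_add hTA.2 (hb.trans (mul_le_mul_right hedist _))
        _ = ENNReal.ofReal a * v t' + ENNReal.ofReal (ε * T) := by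
          rw [← hadd, mul_add]; ring
        _ ≤ ENNReal.ofReal a * v t' + ENNReal.ofReal (ε * t') := by
          exact add_le_add le_rfl (ENNReal.ofReal_le_ofReal (by nlinarith))
      have := le_csSup hAbdd ht'A
      linarith
  -- conclude
  have := hTA.2
  rw [hTeq] at this
  refine this.trans ?_
  have : v 1 = eVariationOn γ (Icc 0 1) := by rw [hv]; simp
  rw [this, mul_one]
end Aux

/-- If `lip f (x) ≤ C` for all `x` and `X` is `λ`-quasiconvex, then `f` is
`(C·λ)`-Lipschitz. -/
theorem stmt_1 {X Y : Type*} [MetricSpace X] [MetricSpace Y] (C lam : ℝ) (hC : 0 ≤ C)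
    (hlam : 1 ≤ lam) (f : X → Y) (hf : ∀ x : X, plip f x ≤ ENNReal.ofReal C)
    (hqc : QuasiconvexSet (Set.univ : Set X) lam) :
    LipschitzWith (Real.toNNReal (C * lam)) f := by
  intro x y
  have hfc : Continuous f :=
    stmt1_cont f (by linarith : (0:ℝ) ≤ C + 1)
      (fun x δ hδ => stmt1_key hC f hf (lt_add_one C) x hδ)
  obtain ⟨γ, hγc, -, hγ0, hγ1, hγv⟩ := hqc x (Set.mem_univ x) y (Set.mem_univ y)
  set D := dist x y with hD
  have hD0 : 0 ≤ D := dist_nonneg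
  have hmain : ∀ u : ℝ, 0 < u →
      edist (f x) (f y) ≤ ENNReal.ofReal ((C + u) * (lam * D) + u) := by
    intro u hu
    have hch := stmt1_chain f hfc (by linarith : (0:ℝ) ≤ C + u / 2)
      (by linarith : C + u / 2 < C + u) hu
      (fun x δ hδ => stmt1_key hC f hf (by linarith : C < C + u / 2) x hδ) γ hγc
    rw [hγ0, hγ1] at hch
    refine hch.trans ?_
    have h1 : ENNReal.ofReal (C + u) * eVariationOn γ (Set.Icc 0 1)
        ≤ ENNReal.ofReal (C + u) * ENNReal.ofReal (lam * D) :=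
      mul_le_mul_right hγv _
    calc ENNReal.ofReal (C + u) * eVariationOn γ (Set.Icc 0 1) + ENNReal.ofReal u
        ≤ ENNReal.ofReal (C + u) * ENNReal.ofReal (lam * D) + ENNReal.ofReal u :=
          add_le_add h1 le_rfl
      _ = ENNReal.ofReal ((C + u) * (lam * D) + u) := by
          rw [← ENNReal.ofReal_mul (by linarith), ← ENNReal.ofReal_add (by positivity) hu.le]
  have hne : edist (f x) (f y) ≠ ⊤ :=
    ((hmain 1 one_pos).trans_lt ENNReal.ofReal_lt_top).ne
  set r := (edist (f x) (f y)).toReal with hr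
  have hrle : ∀ u : ℝ, 0 < u → r ≤ (C + u) * (lam * D) + u := by
    intro u hu
    exact ENNReal.toReal_le_of_le_ofReal (by positivity) (hmain u hu)
  have hrfin : r ≤ C * lam * D := by
    by_contra hcon
    push_neg at hcon
    set u := (r - C * lam * D) / (lam * D + 2) with hu
    have hu0 : 0 < u := by
      apply div_pos (by linarith) (by positivity)
    have h := hrle u hu0
    have h2 : u * (lam * D + 2) = r - C * lam * D := by
      rw [hu]; field_simp
    nlinarith
  have hfinal : edist (f x) (f y) ≤ ENNReal.ofReal (C * lam * D) := by
    rw [← ENNReal.ofReal_toReal hne]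
    exact ENNReal.ofReal_le_ofReal hrfin
  refine hfinal.trans ?_
  rw [edist_dist, ← hD]
  rw [show ((C * lam).toNNReal : ℝ≥0∞) = ENNReal.ofReal (C * lam) from rfl,
    ← ENNReal.ofReal_mul (by positivity)]
end

section
/- Let I be a nonempty index set and let Σ be a finite-dimensional subcomplex of Σ(I) such that |Σ| is path-connected. Then the intrinsic metric d_i on |Σ| is finite, and d_i and the ℓ₂-metric induce the same topology on |Σ|. -/
open Set Metric Filter MeasureTheory
open scoped ENNReal NNReal

section Aux

variable {I : Type*}

lemma stdVec_self (i : I) : stdVec i i = (1 : ℝ) := by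
  letI := Classical.decEq I
  exact lp.single_apply_self 2 i 1

lemma stdVec_ne {i j : I} (h : j ≠ i) : stdVec i j = (0 : ℝ) := by
  letI := Classical.decEq I
  exact lp.single_apply_ne 2 i 1 h

lemma mem_faceSet_props {s : Finset I} {x : L2 I} (hx : x ∈ faceSet s) :
    (∀ i, 0 ≤ x i) ∧ (∀ i, i ∉ s → x i = 0) ∧ ∑ i ∈ s, x i = 1 := by
  classical
  have hmin : convexHull ℝ (stdVec '' (s : Set I)) ⊆
      {y : L2 I | (∀ i, 0 ≤ y i) ∧ (∀ i, i ∉ s → y i = 0) ∧ ∑ i ∈ s, y i = 1} := by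
    apply convexHull_min
    · rintro _ ⟨i, hi, rfl⟩
      refine ⟨?_, ?_, ?_⟩
      · intro j
        rcases eq_or_ne j i with rfl | h
        · simp [stdVec_self]
        · simp [stdVec_ne h]
      · intro j hj
        exact stdVec_ne (fun h => hj (h ▸ hi))
      · have : ∀ j ∈ s, stdVec i j = if j = i then (1 : ℝ) else 0 := by
          intro j _
          rcases eq_or_ne j i with rfl | h
          · simp [stdVec_self]
          · simp [stdVec_ne h, h]
        rw [Finset.sum_congr rfl this, Finset.sum_ite_eq' s i (fun _ => (1 : ℝ))]
        simp [Finset.mem_coe.mp hi]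
    · intro y hy z hz a b ha hb hab
      obtain ⟨hy0, hys, hysum⟩ := hy
      obtain ⟨hz0, hzs, hzsum⟩ := hz
      have hco : ∀ j, (a • y + b • z) j = a * y j + b * z j := by
        intro j
        simp [lp.coeFn_add, lp.coeFn_smul]; rfl
      refine ⟨fun j => ?_, fun j hj => ?_, ?_⟩
      · rw [hco]
        exact add_nonneg (mul_nonneg ha (hy0 j)) (mul_nonneg hb (hz0 j))
      · rw [hco, hys j hj, hzs j hj]; ring
      · simp only [hco]
        rw [Finset.sum_add_distrib, ← Finset.mul_sum, ← Finset.mul_sum, hysum, hzsum,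
          mul_one, mul_one]
        exact hab
  exact hmin hx

lemma mem_faceSet_of {s' t : Finset I} {x : L2 I} (h0 : ∀ i, 0 ≤ x i)
    (hsupp : ∀ j, j ∉ s' → x j = 0) (hsum : ∑ i ∈ s', x i = 1) (hsub : s' ⊆ t) :
    x ∈ faceSet t := by
  classical
  have hx : x = ∑ i ∈ s', x i • stdVec i := by
    ext j
    have h1 : (∑ i ∈ s', x i • stdVec i) j = ∑ i ∈ s', x i * stdVec i j := by
      rw [lp.coeFn_sum, Finset.sum_apply]
      refine Finset.sum_congr rfl fun i _ => ?_
      simp [lp.coeFn_smul]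
    have h2 : ∀ i ∈ s', x i * stdVec i j = if i = j then x i else 0 := by
      intro i _
      rcases eq_or_ne i j with rfl | h
      · simp [stdVec_self]
      · simp [stdVec_ne h.symm, h]
    rw [h1, Finset.sum_congr rfl h2, Finset.sum_ite_eq' s' j (fun i => x i)]
    by_cases hj : j ∈ s'
    · simp [hj]
    · simp [hj, hsupp j hj]
  rw [hx, ← Finset.centerMass_eq_of_sum_1 s' stdVec hsum]
  exact Finset.centerMass_mem_convexHull s' (fun i _ => h0 i) (hsum ▸ one_pos)
    (fun i hi => Set.mem_image_of_mem _ (hsub hi))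

lemma abs_apply_le_norm (x y : L2 I) (i : I) : |x i - y i| ≤ ‖x - y‖ := by
  have := lp.norm_apply_le_norm (p := 2) (by norm_num) (x - y) i
  rwa [lp.coeFn_sub, Pi.sub_apply, Real.norm_eq_abs] at this

/-- Key geometric lemma: near any point of the carrier, segments to other points of the
carrier stay in the carrier. -/
lemma key_nbhd {F : Set (Finset I)} {x : L2 I} (hx : x ∈ cpxCarrier F) :
    ∃ δ : ℝ, 0 < δ ∧ ∀ y ∈ cpxCarrier F, ‖x - y‖ < δ → segment ℝ x y ⊆ cpxCarrier F := by
  classical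
  obtain ⟨s, hsF, hxs⟩ := Set.mem_iUnion₂.mp hx
  obtain ⟨h0, hsupp, hsum⟩ := mem_faceSet_props hxs
  set s' : Finset I := s.filter (fun i => x i ≠ 0) with hs'
  have hs'sub : s' ⊆ s := Finset.filter_subset _ _
  have hxsupp : ∀ j, j ∉ s' → x j = 0 := by
    intro j hj
    by_cases hjs : j ∈ s
    · by_contra h
      exact hj (Finset.mem_filter.mpr ⟨hjs, h⟩)
    · exact hsupp j hjs
  have hsum' : ∑ i ∈ s', x i = 1 := by
    rw [hs', Finset.sum_filter_of_ne (fun i _ h => h)]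
    exact hsum
  have hs'ne : s'.Nonempty := by
    rcases Finset.eq_empty_or_nonempty s' with h | h
    · exfalso
      rw [h, Finset.sum_empty] at hsum'
      norm_num at hsum'
    · exact h
  refine ⟨s'.inf' hs'ne (fun i => x i), ?_, ?_⟩
  · rw [Finset.lt_inf'_iff]
    intro i hi
    exact lt_of_le_of_ne (h0 i) (Ne.symm (Finset.mem_filter.mp hi).2)
  · intro y hy hnorm
    obtain ⟨t, htF, hyt⟩ := Set.mem_iUnion₂.mp hy
    obtain ⟨hy0, hyts, _⟩ := mem_faceSet_props hyt
    have hsub : s' ⊆ t := by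
      intro i hi
      by_contra hit
      have hyi : y i = 0 := hyts i hit
      have h1 : |x i - y i| ≤ ‖x - y‖ := abs_apply_le_norm x y i
      have h2 : x i ≤ |x i - y i| := by
        rw [hyi, sub_zero, abs_of_nonneg (h0 i)]
      have h3 : s'.inf' hs'ne (fun i => x i) ≤ x i := Finset.inf'_le _ hi
      linarith
    have hxt : x ∈ faceSet t := mem_faceSet_of h0 hxsupp hsum' hsub
    intro w hw
    have hwt : w ∈ faceSet t := (convex_convexHull ℝ _).segment_subset hxt hyt hw
    exact Set.mem_iUnion₂.mpr ⟨t, htF, hwt⟩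

variable {X : Type*} [PseudoMetricSpace X]

lemma intrinsicDist_le {S : Set X} {x y : X} {γ : ℝ → X}
    (h : ContinuousOn γ (Set.Icc 0 1) ∧ Set.MapsTo γ (Set.Icc 0 1) S ∧ γ 0 = x ∧ γ 1 = y) :
    intrinsicDist S x y ≤ eVariationOn γ (Set.Icc 0 1) :=
  iInf₂_le γ h

lemma edist_le_intrinsicDist {S : Set X} {x y : X} :
    edist x y ≤ intrinsicDist S x y := by
  refine le_iInf fun γ => le_iInf fun hγ => ?_
  obtain ⟨_, _, h0, h1⟩ := hγ
  calc edist x y = edist (γ 0) (γ 1) := by rw [h0, h1]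
    _ ≤ eVariationOn γ (Set.Icc 0 1) :=
        eVariationOn.edist_le γ ⟨le_refl (0:ℝ), zero_le_one⟩ ⟨zero_le_one, le_refl (1:ℝ)⟩

lemma intrinsicDist_self {S : Set X} {x : X} (hx : x ∈ S) : intrinsicDist S x x = 0 := by
  refine le_antisymm ?_ (zero_le)
  have h : intrinsicDist S x x ≤ eVariationOn (fun _ : ℝ => x) (Set.Icc 0 1) :=
    intrinsicDist_le ⟨continuousOn_const, fun _ _ => hx, rfl, rfl⟩
  rwa [eVariationOn.constant_on (by rintro _ ⟨a, _, rfl⟩ _ ⟨b, _, rfl⟩; rfl)] at h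

/-- Straight segments have intrinsic length at most the distance. -/
lemma intrinsicDist_le_edist_of_segment {E : Type*} [NormedAddCommGroup E] [NormedSpace ℝ E]
    {S : Set E} {x y : E} (hseg : segment ℝ x y ⊆ S) :
    intrinsicDist S x y ≤ edist x y := by
  set γ : ℝ → E := fun t => x + t • (y - x) with hγdef
  have hmaps : Set.MapsTo γ (Set.Icc 0 1) S := by
    intro t ht
    apply hseg
    rw [segment_eq_image' ℝ x y]
    exact Set.mem_image_of_mem _ ht
  have hcont : ContinuousOn γ (Set.Icc 0 1) :=
    (continuous_const.add (continuous_id.smul continuous_const)).continuousOn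
  have h0 : γ 0 = x := by simp [hγdef]
  have h1 : γ 1 = y := by simp [hγdef]
  have hlip : LipschitzWith ‖y - x‖₊ γ := by
    apply LipschitzWith.of_dist_le_mul
    intro a b
    have : γ a - γ b = (a - b) • (y - x) := by
      simp [hγdef, sub_smul]
    rw [dist_eq_norm, this, norm_smul, Real.dist_eq, Real.norm_eq_abs, coe_nnnorm, mul_comm]
  have hvar : eVariationOn γ (Set.Icc 0 1) ≤ edist x y := by
    have hcomp : eVariationOn (γ ∘ id) (Set.Icc (0:ℝ) 1) ≤
        ‖y - x‖₊ * eVariationOn (id : ℝ → ℝ) (Set.Icc 0 1) :=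
      (hlip.lipschitzOnWith).comp_eVariationOn_le (Set.mapsTo_univ _ _)
    have hid : eVariationOn (id : ℝ → ℝ) (Set.Icc 0 1) ≤ ENNReal.ofReal 1 := by
      have := MonotoneOn.eVariationOn_le (f := (id : ℝ → ℝ)) (s := Set.Icc (0:ℝ) 1)
        (monotoneOn_id) (a := 0) (b := 1) ⟨le_refl (0:ℝ), zero_le_one⟩
        ⟨zero_le_one, le_refl (1:ℝ)⟩
      rw [Set.inter_self] at this
      simpa using this
    calc eVariationOn γ (Set.Icc 0 1) = eVariationOn (γ ∘ id) (Set.Icc 0 1) := rfl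
      _ ≤ ‖y - x‖₊ * eVariationOn (id : ℝ → ℝ) (Set.Icc 0 1) := hcomp
      _ ≤ ‖y - x‖₊ * ENNReal.ofReal 1 := by gcongr
      _ = ‖y - x‖₊ := by rw [ENNReal.ofReal_one, mul_one]
      _ = edist y x := by rw [edist_nndist, nndist_eq_nnnorm]
      _ = edist x y := edist_comm y x
  exact le_trans (intrinsicDist_le ⟨hcont, hmaps, h0, h1⟩) hvar

/-- Concatenation bound for the intrinsic distance. -/
lemma intrinsicDist_le_concat {S : Set X} {x y z : X} {γ₁ γ₂ : ℝ → X}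
    (h₁ : ContinuousOn γ₁ (Set.Icc 0 1)) (m₁ : Set.MapsTo γ₁ (Set.Icc 0 1) S)
    (e₁0 : γ₁ 0 = x) (e₁1 : γ₁ 1 = y)
    (h₂ : ContinuousOn γ₂ (Set.Icc 0 1)) (m₂ : Set.MapsTo γ₂ (Set.Icc 0 1) S)
    (e₂0 : γ₂ 0 = y) (e₂1 : γ₂ 1 = z) :
    intrinsicDist S x z ≤ eVariationOn γ₁ (Set.Icc 0 1) + eVariationOn γ₂ (Set.Icc 0 1) := by
  classical
  set γ : ℝ → X := fun t => if t ≤ 1/2 then γ₁ (2*t) else γ₂ (2*t - 1) with hγdef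
  have eq1 : Set.EqOn γ (γ₁ ∘ fun t => 2*t) (Set.Icc 0 (1/2)) := fun t ht => if_pos ht.2
  have eq2 : Set.EqOn γ (γ₂ ∘ fun t => 2*t - 1) (Set.Icc (1/2) 1) := by
    intro t ht
    by_cases h : t ≤ 1/2
    · have h' : t = 1/2 := le_antisymm h ht.1
      subst h'
      have : (2 : ℝ) * (1/2) - 1 = 0 := by norm_num
      simp only [hγdef, if_pos le_rfl, Function.comp_apply, this, e₂0]
      rw [show (2:ℝ) * (1/2) = 1 by norm_num, e₁1]
    · simp only [hγdef, if_neg h, Function.comp_apply]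
  have mt₁ : Set.MapsTo (fun t : ℝ => 2*t) (Set.Icc 0 (1/2)) (Set.Icc 0 1) := by
    intro t ht
    simp only [Set.mem_Icc] at ht ⊢
    constructor <;> linarith
  have mt₂ : Set.MapsTo (fun t : ℝ => 2*t - 1) (Set.Icc (1/2) 1) (Set.Icc 0 1) := by
    intro t ht
    simp only [Set.mem_Icc] at ht ⊢
    constructor <;> linarith
  have hc₁' : ContinuousOn (fun t : ℝ => 2*t) (Set.Icc 0 (1/2)) := by fun_prop
  have hc₂' : ContinuousOn (fun t : ℝ => 2*t - 1) (Set.Icc (1/2) 1) := by fun_prop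
  have c₁ : ContinuousOn (γ₁ ∘ fun t => 2*t) (Set.Icc 0 (1/2)) := h₁.comp hc₁' mt₁
  have c₂ : ContinuousOn (γ₂ ∘ fun t => 2*t - 1) (Set.Icc (1/2) 1) := h₂.comp hc₂' mt₂
  have cont1 : ContinuousOn γ (Set.Icc 0 (1/2)) := c₁.congr eq1
  have cont2 : ContinuousOn γ (Set.Icc (1/2) 1) := c₂.congr eq2
  have hunion : Set.Icc (0:ℝ) 1 = Set.Icc 0 (1/2) ∪ Set.Icc (1/2) 1 :=
    (Set.Icc_union_Icc_eq_Icc (by norm_num) (by norm_num)).symm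
  have hcont : ContinuousOn γ (Set.Icc 0 1) := by
    rw [hunion]
    intro t ht
    apply ContinuousWithinAt.union
    · by_cases h : t ∈ Set.Icc (0:ℝ) (1/2)
      · exact cont1 t h
      · exact continuousWithinAt_of_notMem_closure (by rwa [isClosed_Icc.closure_eq])
    · by_cases h : t ∈ Set.Icc (1/2 : ℝ) 1
      · exact cont2 t h
      · exact continuousWithinAt_of_notMem_closure (by rwa [isClosed_Icc.closure_eq])
  have hmaps : Set.MapsTo γ (Set.Icc 0 1) S := by
    intro t ht
    by_cases h : t ≤ 1/2
    · rw [hγdef]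
      simp only [if_pos h]
      exact m₁ ⟨by linarith [ht.1], by linarith⟩
    · rw [hγdef]
      simp only [if_neg h]
      push_neg at h
      exact m₂ ⟨by linarith, by linarith [ht.2]⟩
  have hg0 : γ 0 = x := by
    rw [hγdef]
    simp only [if_pos (by norm_num : (0:ℝ) ≤ 1/2), mul_zero, e₁0]
  have hg1 : γ 1 = z := by
    rw [hγdef]
    simp only [if_neg (by norm_num : ¬ (1:ℝ) ≤ 1/2)]
    rw [show (2:ℝ) * 1 - 1 = 1 by norm_num, e₂1]
  have himg1 : (fun t : ℝ => 2*t) '' Set.Icc 0 (1/2) = Set.Icc 0 1 := by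
    ext u
    simp only [Set.mem_image, Set.mem_Icc]
    constructor
    · rintro ⟨t, ⟨ht1, ht2⟩, rfl⟩
      exact ⟨by linarith, by linarith⟩
    · intro ⟨h1, h2⟩
      exact ⟨u/2, ⟨by linarith, by linarith⟩, by ring⟩
  have himg2 : (fun t : ℝ => 2*t - 1) '' Set.Icc (1/2) 1 = Set.Icc 0 1 := by
    ext u
    simp only [Set.mem_image, Set.mem_Icc]
    constructor
    · rintro ⟨t, ⟨ht1, ht2⟩, rfl⟩
      exact ⟨by linarith, by linarith⟩
    · intro ⟨h1, h2⟩
      exact ⟨(u+1)/2, ⟨by linarith, by linarith⟩, by ring⟩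
  have mono1 : MonotoneOn (fun t : ℝ => 2*t) (Set.Icc 0 (1/2)) := fun a _ b _ hab => by
    dsimp; linarith
  have mono2 : MonotoneOn (fun t : ℝ => 2*t - 1) (Set.Icc (1/2) 1) := fun a _ b _ hab => by
    dsimp; linarith
  have var1 : eVariationOn γ (Set.Icc 0 (1/2)) = eVariationOn γ₁ (Set.Icc 0 1) := by
    rw [eVariationOn.eq_of_eqOn eq1, eVariationOn.comp_eq_of_monotoneOn γ₁ _ mono1, himg1]
  have var2 : eVariationOn γ (Set.Icc (1/2) 1) = eVariationOn γ₂ (Set.Icc 0 1) := by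
    rw [eVariationOn.eq_of_eqOn eq2, eVariationOn.comp_eq_of_monotoneOn γ₂ _ mono2, himg2]
  have hsplit : eVariationOn γ (Set.Icc 0 1) =
      eVariationOn γ (Set.Icc 0 (1/2)) + eVariationOn γ (Set.Icc (1/2) 1) := by
    have := eVariationOn.Icc_add_Icc γ (s := Set.Icc (0:ℝ) 1)
      (by norm_num : (0:ℝ) ≤ 1/2) (by norm_num : (1/2:ℝ) ≤ 1)
      (⟨by norm_num, by norm_num⟩ : (1/2:ℝ) ∈ Set.Icc (0:ℝ) 1)
    rw [Set.inter_eq_self_of_subset_right (Set.Icc_subset_Icc le_rfl (by norm_num)),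
      Set.inter_eq_self_of_subset_right (Set.Icc_subset_Icc (by norm_num) le_rfl),
      Set.inter_self] at this
    exact this.symm
  calc intrinsicDist S x z ≤ eVariationOn γ (Set.Icc 0 1) :=
        intrinsicDist_le ⟨hcont, hmaps, hg0, hg1⟩
    _ = eVariationOn γ₁ (Set.Icc 0 1) + eVariationOn γ₂ (Set.Icc 0 1) := by
        rw [hsplit, var1, var2]

lemma intrinsicDist_triangle (S : Set X) (x y z : X) :
    intrinsicDist S x z ≤ intrinsicDist S x y + intrinsicDist S y z := by
  by_cases hxy : intrinsicDist S x y = ⊤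
  · rw [hxy, top_add]; exact le_top
  by_cases hyz : intrinsicDist S y z = ⊤
  · rw [hyz, add_top]; exact le_top
  refine ENNReal.le_of_forall_pos_le_add fun ε hε _ => ?_
  have hε2 : ((ε : ℝ≥0∞) / 2) ≠ 0 := by
    simp [ENNReal.div_eq_zero_iff, hε.ne']
  have h1 : intrinsicDist S x y < intrinsicDist S x y + ε/2 := ENNReal.lt_add_right hxy hε2
  have h2 : intrinsicDist S y z < intrinsicDist S y z + ε/2 := ENNReal.lt_add_right hyz hε2
  rw [intrinsicDist, iInf_lt_iff] at h1 h2
  obtain ⟨γ₁, h1⟩ := h1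
  obtain ⟨γ₂, h2⟩ := h2
  rw [iInf_lt_iff] at h1 h2
  obtain ⟨⟨hc₁, hm₁, he₁0, he₁1⟩, hv₁⟩ := h1
  obtain ⟨⟨hc₂, hm₂, he₂0, he₂1⟩, hv₂⟩ := h2
  calc intrinsicDist S x z
      ≤ eVariationOn γ₁ (Set.Icc 0 1) + eVariationOn γ₂ (Set.Icc 0 1) :=
        intrinsicDist_le_concat hc₁ hm₁ he₁0 he₁1 hc₂ hm₂ he₂0 he₂1
    _ ≤ (intrinsicDist S x y + ε/2) + (intrinsicDist S y z + ε/2) :=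
        add_le_add hv₁.le hv₂.le
    _ = (intrinsicDist S x y + intrinsicDist S y z) + (ε/2 + ε/2) := by ring
    _ = intrinsicDist S x y + intrinsicDist S y z + ε := by rw [ENNReal.add_halves]

end Aux

/-- If `|Σ|` is path-connected (and `Σ` finite-dimensional), then the
intrinsic metric `d_i` on `|Σ|` is finite and induces the same topology as the `ℓ₂`-metric. -/
theorem stmt_4 {I : Type*} [Nonempty I] (n : ℕ) (F : Set (Finset I)) (hF : IsSubcomplex F)
    (hdim : ∀ s ∈ F, s.card ≤ n + 1)
    (hpc : IsPathConnected (cpxCarrier F)) :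
    (∀ x ∈ cpxCarrier F, ∀ y ∈ cpxCarrier F, intrinsicDist (cpxCarrier F) x y < ⊤) ∧
    (∀ x ∈ cpxCarrier F, ∀ ε : ℝ, 0 < ε → ∃ δ : ℝ, 0 < δ ∧ ∀ y ∈ cpxCarrier F,
        ‖x - y‖ < δ → intrinsicDist (cpxCarrier F) x y < ENNReal.ofReal ε) ∧
    (∀ x ∈ cpxCarrier F, ∀ ε : ℝ, 0 < ε → ∃ δ : ℝ, 0 < δ ∧ ∀ y ∈ cpxCarrier F,
        intrinsicDist (cpxCarrier F) x y < ENNReal.ofReal δ → ‖x - y‖ < ε) := by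
  classical
  have part2 : ∀ x ∈ cpxCarrier F, ∀ ε : ℝ, 0 < ε → ∃ δ : ℝ, 0 < δ ∧ ∀ y ∈ cpxCarrier F,
      ‖x - y‖ < δ → intrinsicDist (cpxCarrier F) x y < ENNReal.ofReal ε := by
    intro x hx ε hε
    obtain ⟨δ₀, hδ₀, hseg⟩ := key_nbhd hx
    refine ⟨min δ₀ ε, lt_min hδ₀ hε, fun y hy hxy => ?_⟩
    have h1 : intrinsicDist (cpxCarrier F) x y ≤ edist x y :=
      intrinsicDist_le_edist_of_segment (hseg y hy (lt_of_lt_of_le hxy (min_le_left _ _)))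
    calc intrinsicDist (cpxCarrier F) x y ≤ edist x y := h1
      _ = ENNReal.ofReal ‖x - y‖ := by rw [edist_dist, dist_eq_norm]
      _ < ENNReal.ofReal ε :=
          (ENNReal.ofReal_lt_ofReal_iff hε).mpr (lt_of_lt_of_le hxy (min_le_right _ _))
  refine ⟨?_, part2, ?_⟩
  · -- finiteness via connectedness
    intro x hx
    have H : ∀ z, z ∈ cpxCarrier F → ∃ δ : ℝ, 0 < δ ∧ ∀ y ∈ cpxCarrier F,
        ‖z - y‖ < δ → segment ℝ z y ⊆ cpxCarrier F := fun z hz => key_nbhd hz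
    choose! δ hδpos hδ using H
    have hfin : ∀ z ∈ cpxCarrier F, ∀ y ∈ cpxCarrier F, ‖z - y‖ < δ z →
        intrinsicDist (cpxCarrier F) z y < ⊤ ∧ intrinsicDist (cpxCarrier F) y z < ⊤ := by
      intro z hz y hy h
      have hs := hδ z hz y hy h
      constructor
      · exact lt_of_le_of_lt (intrinsicDist_le_edist_of_segment hs) (edist_lt_top z y)
      · have hs' : segment ℝ y z ⊆ cpxCarrier F := by rwa [segment_symm] at hs
        exact lt_of_le_of_lt (intrinsicDist_le_edist_of_segment hs') (edist_lt_top y z)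
    set u : Set (L2 I) := ⋃ (z : L2 I) (_ : z ∈ cpxCarrier F ∧
        intrinsicDist (cpxCarrier F) x z < ⊤), Metric.ball z (δ z) with hu
    set v : Set (L2 I) := ⋃ (z : L2 I) (_ : z ∈ cpxCarrier F ∧
        ¬ intrinsicDist (cpxCarrier F) x z < ⊤), Metric.ball z (δ z) with hv
    have hou : IsOpen u := isOpen_iUnion fun z => isOpen_iUnion fun _ => Metric.isOpen_ball
    have hov : IsOpen v := isOpen_iUnion fun z => isOpen_iUnion fun _ => Metric.isOpen_ball
    have hcov : cpxCarrier F ⊆ u ∪ v := by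
      intro z hz
      by_cases h : intrinsicDist (cpxCarrier F) x z < ⊤
      · exact Or.inl (Set.mem_iUnion₂.mpr ⟨z, ⟨hz, h⟩, Metric.mem_ball_self (hδpos z hz)⟩)
      · exact Or.inr (Set.mem_iUnion₂.mpr ⟨z, ⟨hz, h⟩, Metric.mem_ball_self (hδpos z hz)⟩)
    have hballnorm : ∀ (z w : L2 I), w ∈ Metric.ball z (δ z) → ‖z - w‖ < δ z := by
      intro z w hw
      rw [Metric.mem_ball] at hw
      rwa [← dist_eq_norm, dist_comm]
    have hdisj : cpxCarrier F ∩ (u ∩ v) = ∅ := by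
      by_contra h
      obtain ⟨w, hwc, hwu, hwv⟩ := Set.nonempty_iff_ne_empty.mpr h
      obtain ⟨z₁, ⟨hz₁c, hz₁f⟩, hwb₁⟩ := Set.mem_iUnion₂.mp hwu
      obtain ⟨z₂, ⟨hz₂c, hz₂f⟩, hwb₂⟩ := Set.mem_iUnion₂.mp hwv
      have h1 : intrinsicDist (cpxCarrier F) z₁ w < ⊤ :=
        (hfin z₁ hz₁c w hwc (hballnorm z₁ w hwb₁)).1
      have hxw : intrinsicDist (cpxCarrier F) x w < ⊤ :=
        lt_of_le_of_lt (intrinsicDist_triangle _ x z₁ w) (ENNReal.add_lt_top.mpr ⟨hz₁f, h1⟩)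
      have h2 : intrinsicDist (cpxCarrier F) w z₂ < ⊤ :=
        (hfin z₂ hz₂c w hwc (hballnorm z₂ w hwb₂)).2
      exact hz₂f (lt_of_le_of_lt (intrinsicDist_triangle _ x w z₂)
        (ENNReal.add_lt_top.mpr ⟨hxw, h2⟩))
    have hune : (cpxCarrier F ∩ u).Nonempty := by
      refine ⟨x, hx, Set.mem_iUnion₂.mpr ⟨x, ⟨hx, ?_⟩, Metric.mem_ball_self (hδpos x hx)⟩⟩
      rw [intrinsicDist_self hx]
      exact ENNReal.zero_lt_top
    have hpre : IsPreconnected (cpxCarrier F) := hpc.isConnected.isPreconnected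
    have hvempty : ∀ y ∈ cpxCarrier F, y ∉ v := by
      intro y hy hyv
      have := hpre u v hou hov hcov hune ⟨y, hy, hyv⟩
      rw [hdisj] at this
      exact Set.not_nonempty_empty this
    intro y hy
    rcases hcov hy with hyu | hyv
    · obtain ⟨z, ⟨hzc, hzf⟩, hyb⟩ := Set.mem_iUnion₂.mp hyu
      have h1 : intrinsicDist (cpxCarrier F) z y < ⊤ :=
        (hfin z hzc y hy (hballnorm z y hyb)).1
      exact lt_of_le_of_lt (intrinsicDist_triangle _ x z y)
        (ENNReal.add_lt_top.mpr ⟨hzf, h1⟩)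
    · exact absurd hyv (hvempty y hy)
  · -- lower bound direction
    intro x hx ε hε
    refine ⟨ε, hε, fun y hy h => ?_⟩
    have h1 : edist x y < ENNReal.ofReal ε := lt_of_le_of_lt edist_le_intrinsicDist h
    rw [edist_dist] at h1
    have := (ENNReal.ofReal_lt_ofReal_iff hε).mp h1
    rwa [dist_eq_norm] at this
end

section
/- Let I be a nonempty index set, let Σ be a subcomplex of Σ(I) equipped with the ℓ₂-metric, let Y be a metric space, h : |Σ| → Y a map, L > 0, and A ⊂ |Σ| a nonempty subset such that h is L-Lipschitz on every face σ of Σ with st σ ∩ A ≠ ∅. Then the restriction h' of h to |Hull(A)| satisfies lip h'(x) ≤ L for every x ∈ |Hull(A)|. -/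
open Set Metric Filter MeasureTheory
open scoped ENNReal NNReal

section Stmt5Aux
variable {I : Type*}

lemma stdVec_apply_self (i : I) : (stdVec i : ∀ _ : I, ℝ) i = 1 := by
  letI := Classical.decEq I
  exact lp.single_apply_self 2 i 1

lemma stdVec_apply_ne {i j : I} (h : j ≠ i) : (stdVec i : ∀ _ : I, ℝ) j = 0 := by
  letI := Classical.decEq I
  exact lp.single_apply_ne 2 i 1 h

lemma stdVec_apply [DecidableEq I] (i j : I) :
    (stdVec i : ∀ _ : I, ℝ) j = if j = i then 1 else 0 := by
  by_cases h : j = i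
  · subst h; simp [stdVec_apply_self]
  · simp [h, stdVec_apply_ne h]

lemma faceSet_props {s : Finset I} {x : L2 I} (hx : x ∈ faceSet s) :
    (∀ i, 0 ≤ x i) ∧ (∀ i ∉ s, x i = 0) ∧ ∑ i ∈ s, x i = 1 := by
  classical
  set T : Set (L2 I) :=
    {x | (∀ i, 0 ≤ x i) ∧ (∀ i ∉ s, x i = 0) ∧ ∑ i ∈ s, x i = 1} with hT
  have hconv : Convex ℝ T := by
    intro u hu v hv a b ha hb hab
    have hco : ∀ j, (a • u + b • v) j = a * u j + b * v j := by
      intro j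
      simp [lp.coeFn_add, lp.coeFn_smul, Pi.smul_apply, smul_eq_mul]
      rfl
    refine ⟨fun i => ?_, fun i hi => ?_, ?_⟩
    · rw [hco]; exact add_nonneg (mul_nonneg ha (hu.1 i)) (mul_nonneg hb (hv.1 i))
    · rw [hco, hu.2.1 i hi, hv.2.1 i hi]; ring
    · simp only [hco, Finset.sum_add_distrib, ← Finset.mul_sum, hu.2.2, hv.2.2]
      simpa using hab
  have hsub : faceSet s ⊆ T := by
    apply convexHull_min _ hconv
    rintro _ ⟨i, hi, rfl⟩
    refine ⟨fun j => ?_, fun j hj => ?_, ?_⟩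
    · rw [stdVec_apply]; split_ifs <;> norm_num
    · rw [stdVec_apply, if_neg]; rintro rfl; exact hj hi
    · simp only [stdVec_apply]
      rw [Finset.sum_ite_eq' s i (fun _ => (1:ℝ)), if_pos (Finset.mem_coe.1 hi)]
  exact hsub hx

lemma mem_faceSet_of_props [DecidableEq I] {s : Finset I} {x : L2 I}
    (h1 : ∀ i, 0 ≤ x i) (h2 : ∀ i ∉ s, x i = 0) (h3 : ∑ i ∈ s, x i = 1) :
    x ∈ faceSet (s.filter fun i => 0 < x i) ∧ (s.filter fun i => 0 < x i).Nonempty := by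
  set t := s.filter fun i => 0 < x i with ht
  have hzero : ∀ i ∉ t, x i = 0 := by
    intro i hi
    by_cases hs : i ∈ s
    · have : ¬ 0 < x i := fun hp => hi (Finset.mem_filter.2 ⟨hs, hp⟩)
      linarith [h1 i]
    · exact h2 i hs
  have hsum : ∑ i ∈ t, x i = 1 := by
    rw [← h3]
    exact Finset.sum_filter_of_ne (fun i _ hne => lt_of_le_of_ne (h1 i) (Ne.symm hne))
  have hne : t.Nonempty := by
    rcases Finset.eq_empty_or_nonempty t with he | hne
    · rw [he] at hsum; simp at hsum
    · exact hne
  have hrepr : x = ∑ i ∈ t, x i • stdVec i := by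
    apply lp.ext
    funext j
    rw [lp.coeFn_sum]
    simp only [Finset.sum_apply, lp.coeFn_smul, Pi.smul_apply, smul_eq_mul, stdVec_apply,
      mul_ite, mul_one, mul_zero]
    rw [Finset.sum_ite_eq t j (fun i => x i)]
    by_cases hj : j ∈ t
    · simp [hj]
    · simp [hj, hzero j hj]
  refine ⟨?_, hne⟩
  rw [hrepr, faceSet]
  exact Convex.sum_mem (convex_convexHull ℝ _)
    (fun i hi => (Finset.mem_filter.1 hi).2.le) hsum
    (fun i hi => subset_convexHull ℝ _ ⟨i, Finset.mem_coe.2 hi, rfl⟩)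

lemma faceSet_mono {s t : Finset I} (h : s ⊆ t) : faceSet s ⊆ faceSet t :=
  convexHull_mono (Set.image_mono (by exact_mod_cast h))

lemma abs_coord_le_dist (x y : L2 I) (i : I) : |x i - y i| ≤ dist x y := by
  have := lp.norm_apply_le_norm (p := 2) (E := fun _ : I => ℝ) two_ne_zero (x - y) i
  rw [dist_eq_norm]
  simpa [lp.coeFn_sub, Pi.sub_apply, Real.norm_eq_abs] using this

end Stmt5Aux

/-- If `h : |Σ| → Y` is `L`-Lipschitz on every face whose open star meets `A`,
then the restriction of `h` to `|Hull(A)|` has pointwise Lipschitz constant `≤ L` everywhere. -/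
theorem stmt_5 {I : Type*} [Nonempty I] {Y : Type*} [MetricSpace Y]
    (F : Set (Finset I)) (hF : IsSubcomplex F)
    (h : L2 I → Y) (L : ℝ) (hL : 0 < L)
    (A : Set (L2 I)) (hA : A.Nonempty) (hAsub : A ⊆ cpxCarrier F)
    (hlip : ∀ s ∈ F, (openStar F s ∩ A).Nonempty →
      LipschitzOnWith (Real.toNNReal L) h (faceSet s)) :
    ∀ x ∈ cpxCarrier (hullFaces F A),
      lipWithin h (cpxCarrier (hullFaces F A)) x ≤ ENNReal.ofReal L := by
  classical
  intro x hx
  have hFmem : F ∈ {G : Set (Finset I) | G ⊆ F ∧ IsSubcomplex G ∧ A ⊆ cpxCarrier G} :=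
    ⟨Subset.rfl, hF, hAsub⟩
  have hHF : hullFaces F A ⊆ F := Set.sInter_subset_of_mem hFmem
  set G : Set (Finset I) := {t | t ∈ F ∧ (openStar F t ∩ A).Nonempty} with hGdef
  have hAG : A ⊆ cpxCarrier G := by
    intro a ha
    rcases Set.mem_iUnion₂.1 (hAsub ha) with ⟨s, hs, has⟩
    obtain ⟨h1, h2, h3⟩ := faceSet_props has
    obtain ⟨hmem, hne⟩ := mem_faceSet_of_props h1 h2 h3
    set σ := s.filter fun i => 0 < a i with hσ
    have hσF : σ ∈ F := hF.down_closed s hs σ hne (Finset.filter_subset _ _)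
    have hstar : a ∈ openStar F σ :=
      Set.mem_iUnion₂.2 ⟨σ, hσF, Set.mem_iUnion.2
        ⟨Finset.Subset.refl σ, ⟨hmem, fun i hi => (Finset.mem_filter.1 hi).2⟩⟩⟩
    exact Set.mem_iUnion₂.2 ⟨σ, ⟨hσF, ⟨a, hstar, ha⟩⟩, hmem⟩
  have hGsub : IsSubcomplex G := by
    refine ⟨?_, fun s hs => hF.faces_nonempty s hs.1, ?_⟩
    · obtain ⟨a, ha⟩ := hA
      rcases Set.mem_iUnion₂.1 (hAG ha) with ⟨s, hs, -⟩
      exact ⟨s, hs⟩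
    · intro s hs t htne hts
      refine ⟨hF.down_closed s hs.1 t htne hts, ?_⟩
      obtain ⟨a, hstar, haA⟩ := hs.2
      rcases Set.mem_iUnion₂.1 hstar with ⟨u, hu, hrest⟩
      rcases Set.mem_iUnion.1 hrest with ⟨hsu, hmem⟩
      exact ⟨a, Set.mem_iUnion₂.2 ⟨u, hu, Set.mem_iUnion.2 ⟨hts.trans hsu, hmem⟩⟩, haA⟩
  have hG : hullFaces F A ⊆ G := Set.sInter_subset_of_mem ⟨fun t ht => ht.1, hGsub, hAG⟩
  rcases Set.mem_iUnion₂.1 hx with ⟨s₀, hs₀, hxs₀⟩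
  obtain ⟨h1, h2, h3⟩ := faceSet_props hxs₀
  obtain ⟨hxmem, hσxne⟩ := mem_faceSet_of_props h1 h2 h3
  set σx := s₀.filter fun i => 0 < x i with hσxdef
  obtain ⟨i₀, hi₀, hmin⟩ := Finset.exists_min_image σx (fun i => x i) hσxne
  set δ := x i₀ with hδdef
  have hδpos : 0 < δ := (Finset.mem_filter.1 hi₀).2
  have key : ∀ s : ℝ, 0 < s → s < δ →
      (⨆ y ∈ cpxCarrier (hullFaces F A) ∩ Metric.ball x s, edist (h x) (h y)) /
        ENNReal.ofReal s ≤ ENNReal.ofReal L := by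
    intro s hs hsδ
    have hsup : (⨆ y ∈ cpxCarrier (hullFaces F A) ∩ Metric.ball x s, edist (h x) (h y))
        ≤ ENNReal.ofReal L * ENNReal.ofReal s := by
      refine iSup₂_le fun y hy => ?_
      obtain ⟨hyC, hyb⟩ := hy
      rcases Set.mem_iUnion₂.1 hyC with ⟨t, htH, hyt⟩
      obtain ⟨g1, g2, g3⟩ := faceSet_props hyt
      have hdxy : dist x y < s := by
        have := Metric.mem_ball.1 hyb; rwa [dist_comm] at this
      have hsub : σx ⊆ t := by
        intro i hi
        by_contra hit
        have hy0 : y i = 0 := g2 i hit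
        have habs := abs_coord_le_dist x y i
        rw [hy0, sub_zero, abs_of_nonneg (h1 i)] at habs
        have hxi : δ ≤ x i := hmin i hi
        linarith
      have hxt : x ∈ faceSet t := faceSet_mono hsub hxmem
      have hLip := hlip t (hHF htH) (hG htH).2
      refine (hLip hxt hyt).trans ?_
      have h1' : (Real.toNNReal L : ℝ≥0∞) = ENNReal.ofReal L := rfl
      rw [h1']
      exact mul_le_mul_right (le_of_lt (edist_lt_ofReal.2 hdxy)) _
    calc (⨆ y ∈ cpxCarrier (hullFaces F A) ∩ Metric.ball x s, edist (h x) (h y)) /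
          ENNReal.ofReal s
        ≤ (ENNReal.ofReal L * ENNReal.ofReal s) / ENNReal.ofReal s :=
          ENNReal.div_le_div_right hsup _
      _ = ENNReal.ofReal L := by
          rw [mul_div_assoc, ENNReal.div_self (by simp [hs]) ENNReal.ofReal_ne_top, mul_one]
  have hev : ∀ᶠ s in nhdsWithin (0:ℝ) (Set.Ioi 0),
      (⨆ y ∈ cpxCarrier (hullFaces F A) ∩ Metric.ball x s, edist (h x) (h y)) /
        ENNReal.ofReal s ≤ ENNReal.ofReal L := by
    filter_upwards [Ioo_mem_nhdsGT_of_mem (Set.mem_Ico.2 ⟨le_refl (0:ℝ), hδpos⟩)] with s hs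
    exact key s hs.1 hs.2
  exact Filter.liminf_le_of_frequently_le' hev.frequently
end

section
/- For every integer m ≥ 1 there exists a constant K > 0 depending only on m with the following property: for every b ∈ Δ^m with |b − o| < r_m/2 and every r > 0, the radial projection ρ_b : Δ^m ∖ {b} → ∂Δ^m is (K/r)-Lipschitz on Δ^m ∖ U(b, r), where U(b, r) denotes the open Euclidean ball of radius r around b. -/
open Set Metric Filter MeasureTheory
open scoped ENNReal NNReal

/-- The standard Euclidean `m`-simplex `Δ^m ⊆ ℝ^{m+1}`. -/
def euSimplex (m : ℕ) : Set (EuclideanSpace ℝ (Fin (m + 1))) :=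
  {x | (∀ i, 0 ≤ x i) ∧ ∑ i, x i = 1}

/-- The relative boundary `∂Δ^m` of the standard Euclidean `m`-simplex
(the union of its proper faces). -/
def euSimplexBdry (m : ℕ) : Set (EuclideanSpace ℝ (Fin (m + 1))) :=
  {x ∈ euSimplex m | ∃ i, x i = 0}

section Aux

/-- Lower bound on the infimum distance from pointwise lower bounds. -/
lemma le_infDist_aux {α : Type*} [PseudoMetricSpace α] {s : Set α} {x : α} {r : ℝ}
    (hs : s.Nonempty) (hr : 0 ≤ r) (h : ∀ y ∈ s, r ≤ dist x y) :
    r ≤ Metric.infDist x s := by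
  have h1 : ENNReal.ofReal r ≤ Metric.infEDist x s := by
    rw [EMetric.le_infEdist]
    intro y hy
    rw [edist_dist]
    exact ENNReal.ofReal_le_ofReal (h y hy)
  have h2 := ENNReal.toReal_mono (Metric.infEdist_ne_top hs) h1
  rwa [ENNReal.toReal_ofReal hr] at h2

/-- A single coordinate difference bounds the Euclidean distance from below. -/
lemma coord_abs_le_dist {n : ℕ} (x y : EuclideanSpace ℝ (Fin n)) (j : Fin n) :
    |x j - y j| ≤ dist x y := by
  rw [EuclideanSpace.dist_eq]
  rw [← Real.sqrt_sq_eq_abs]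
  apply Real.sqrt_le_sqrt
  have := Finset.single_le_sum (f := fun i => dist (x i) (y i) ^ 2)
    (fun i _ => sq_nonneg _) (Finset.mem_univ j)
  simpa [Real.dist_eq, sq_abs] using this

/-- Points of the standard simplex have norm at most one. -/
lemma simplex_norm_le_one {m : ℕ} {z : EuclideanSpace ℝ (Fin (m + 1))}
    (hz : z ∈ euSimplex m) : ‖z‖ ≤ 1 := by
  rw [EuclideanSpace.norm_eq]
  have h1 : ∀ i, ‖z i‖ ^ 2 ≤ z i := by
    intro i
    have h0 := hz.1 i
    have hle : z i ≤ 1 := by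
      calc z i ≤ ∑ j, z j := Finset.single_le_sum (fun j _ => hz.1 j) (Finset.mem_univ i)
        _ = 1 := hz.2
    rw [Real.norm_eq_abs, sq_abs]
    nlinarith
  calc Real.sqrt (∑ i, ‖z i‖ ^ 2) ≤ Real.sqrt (∑ i, z i) :=
        Real.sqrt_le_sqrt (Finset.sum_le_sum fun i _ => h1 i)
    _ = 1 := by rw [hz.2, Real.sqrt_one]

/-- The key two-point estimate for the radial projection, assuming the parameter of the
first point is the smaller one. -/
lemma radial_aux (m : ℕ) (b x y p q : EuclideanSpace ℝ (Fin (m + 1)))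
    (hbm : b ∈ euSimplex m)
    (hb : ∀ j, (4 * ((m : ℝ) + 1))⁻¹ ≤ b j)
    (hp : p ∈ euSimplexBdry m) (hq : q ∈ euSimplexBdry m)
    (s t : ℝ) (hs : 0 ≤ s) (hst : s ≤ t)
    (hpx : p = b + s • (x - b)) (hqy : q = b + t • (y - b))
    (r : ℝ) (hr : 0 < r) (hxr : r ≤ dist x b) :
    dist p q ≤ ((16 * ((m : ℝ) + 1) + 2) / r) * dist x y := by
  set β : ℝ := (4 * ((m : ℝ) + 1))⁻¹ with hβdef
  have hβ : 0 < β := by positivity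
  -- t is positive
  obtain ⟨j0, hj0⟩ := hq.2
  have hqb : β ≤ dist q b := by
    have h1 := coord_abs_le_dist q b j0
    have h2 := hb j0
    rw [hj0] at h1
    rw [abs_sub_comm, sub_zero, abs_of_nonneg (hbm.1 j0)] at h1
    linarith
  have hqneb : q ≠ b := by
    intro h
    rw [h, dist_self] at hqb
    linarith
  have ht : 0 < t := by
    rcases lt_or_eq_of_le (hs.trans hst) with h | h
    · exact h
    · exfalso; apply hqneb; rw [hqy, ← h, zero_smul, add_zero]
  set lam : ℝ := s / t with hlamdef
  have hlam0 : 0 ≤ lam := div_nonneg hs ht.le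
  have hlam1 : lam ≤ 1 := (div_le_one ht).2 hst
  set q' : EuclideanSpace ℝ (Fin (m + 1)) := b + s • (y - b) with hq'def
  -- the boundary coordinate of p
  obtain ⟨j, hj⟩ := hp.2
  have hq'j : q' j = (1 - lam) * b j + lam * q j := by
    have h1 : q' j = b j + s * (y j - b j) := by
      simp [hq'def, PiLp.add_apply, PiLp.smul_apply, PiLp.sub_apply, smul_eq_mul]
    have h2 : q j = b j + t * (y j - b j) := by
      simp [hqy, PiLp.add_apply, PiLp.smul_apply, PiLp.sub_apply, smul_eq_mul]
    have h3 : lam * t = s := div_mul_cancel₀ s ht.ne'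
    rw [h1, h2]
    linear_combination (b j - y j) * h3
  -- lower bound on dist p q'
  have h1 : (1 - lam) * β ≤ dist p q' := by
    have ha := coord_abs_le_dist q' p j
    rw [hj, sub_zero] at ha
    have hb1 : (1 - lam) * β ≤ q' j := by
      rw [hq'j]
      have := hb j
      have := hq.1.1 j
      nlinarith
    have : q' j ≤ |q' j| := le_abs_self _
    rw [dist_comm]
    linarith
  -- upper bound on s
  have hpb : dist p b ≤ 2 := by
    calc dist p b ≤ ‖p‖ + ‖b‖ := by rw [dist_eq_norm]; exact norm_sub_le _ _
      _ ≤ 2 := by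
          have := simplex_norm_le_one hp.1
          have := simplex_norm_le_one hbm
          linarith
  have hspb : dist p b = s * dist x b := by
    rw [hpx, dist_eq_norm, add_sub_cancel_left, norm_smul, Real.norm_eq_abs,
      abs_of_nonneg hs, dist_eq_norm]
  have hs2r : s * r ≤ 2 := by
    calc s * r ≤ s * dist x b := mul_le_mul_of_nonneg_left hxr hs
      _ ≤ 2 := by rw [← hspb]; exact hpb
  have hsle : s ≤ 2 / r := by rw [le_div_iff₀ hr]; linarith
  -- dist p q' bound
  have h2 : dist p q' ≤ (2 / r) * dist x y := by
    have hd : dist p q' = s * dist x y := by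
      rw [hpx, hq'def, dist_eq_norm]
      have : b + s • (x - b) - (b + s • (y - b)) = s • (x - y) := by
        simp only [smul_sub]; abel
      rw [this, norm_smul, Real.norm_eq_abs, abs_of_nonneg hs, dist_eq_norm]
    rw [hd]
    exact mul_le_mul_of_nonneg_right hsle dist_nonneg
  -- dist q' q bound
  have hqb2 : dist q b ≤ 2 := by
    calc dist q b ≤ ‖q‖ + ‖b‖ := by rw [dist_eq_norm]; exact norm_sub_le _ _
      _ ≤ 2 := by
          have := simplex_norm_le_one hq.1
          have := simplex_norm_le_one hbm
          linarith
  have hqbt : dist q b = t * dist y b := by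
    rw [hqy, dist_eq_norm, add_sub_cancel_left, norm_smul, Real.norm_eq_abs,
      abs_of_nonneg ht.le, dist_eq_norm]
  have h3 : dist q' q ≤ (1 - lam) * 2 := by
    have hd : dist q' q = (t - s) * dist y b := by
      rw [hq'def, hqy, dist_eq_norm]
      have : b + s • (y - b) - (b + t • (y - b)) = (s - t) • (y - b) := by
        rw [sub_smul]; abel
      rw [this, norm_smul, Real.norm_eq_abs, abs_of_nonpos (by linarith), dist_eq_norm]
      ring
    have hts : t - s = (1 - lam) * t := by
      rw [hlamdef]; field_simp
    rw [hd, hts]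
    have h4 : t * dist y b ≤ 2 := by rw [← hqbt]; exact hqb2
    have h5 : 0 ≤ (1 - lam) := by linarith
    calc (1 - lam) * t * dist y b = (1 - lam) * (t * dist y b) := by ring
      _ ≤ (1 - lam) * 2 := mul_le_mul_of_nonneg_left h4 h5
  -- combine
  have h7 : dist q' q ≤ 8 * ((m : ℝ) + 1) * dist p q' := by
    have hA : β * dist q' q ≤ 2 * dist p q' := by
      have h3' := mul_le_mul_of_nonneg_left h3 hβ.le
      linarith
    have hβinv : β⁻¹ = 4 * ((m : ℝ) + 1) := by rw [hβdef, inv_inv]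
    calc dist q' q = β⁻¹ * (β * dist q' q) := by field_simp
      _ ≤ β⁻¹ * (2 * dist p q') := mul_le_mul_of_nonneg_left hA (by positivity)
      _ = 8 * ((m : ℝ) + 1) * dist p q' := by rw [hβinv]; ring
  have h8 : dist p q ≤ (8 * ((m : ℝ) + 1) + 1) * dist p q' := by
    have := dist_triangle p q' q
    nlinarith [dist_nonneg (x := p) (y := q')]
  have h9 : (8 * ((m : ℝ) + 1) + 1) * dist p q'
      ≤ (8 * ((m : ℝ) + 1) + 1) * ((2 / r) * dist x y) :=
    mul_le_mul_of_nonneg_left h2 (by positivity)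
  have h10 : (8 * ((m : ℝ) + 1) + 1) * ((2 / r) * dist x y)
      = ((16 * ((m : ℝ) + 1) + 2) / r) * dist x y := by
    field_simp; ring
  linarith [h10 ▸ h9]

end Aux

/-- There is `K = K(m) > 0` such that for every `b ∈ Δ^m` with
`|b − o| < r_m/2` (where `o` is the incenter, i.e. the point of `Δ^m` maximizing the distance
to `∂Δ^m`, and `r_m = d(o, ∂Δ^m)` is the inradius) and every `r > 0`, the radial projection
`ρ_b : Δ^m ∖ {b} → ∂Δ^m` with center `b` is `(K/r)`-Lipschitz on `Δ^m ∖ U(b,r)`. -/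
theorem stmt_13 (m : ℕ) (hm : 1 ≤ m) :
    ∃ K : ℝ, 0 < K ∧
      ∀ o : EuclideanSpace ℝ (Fin (m + 1)), o ∈ euSimplex m →
        -- `o` is the incenter: it maximizes the distance to the boundary over `Δ^m`
        (∀ x ∈ euSimplex m,
          Metric.infDist x (euSimplexBdry m) ≤ Metric.infDist o (euSimplexBdry m)) →
        ∀ b ∈ euSimplex m, dist b o < Metric.infDist o (euSimplexBdry m) / 2 →
          ∀ ρ : EuclideanSpace ℝ (Fin (m + 1)) → EuclideanSpace ℝ (Fin (m + 1)),
            -- `ρ` is the radial projection with center `b`: it maps `Δ^m ∖ {b}` to the unique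
            -- point where the ray from `b` through `x` meets `∂Δ^m`
            (∀ x ∈ euSimplex m \ {b},
              ρ x ∈ euSimplexBdry m ∧ ∃ t : ℝ, 0 ≤ t ∧ ρ x = b + t • (x - b)) →
            ∀ r : ℝ, 0 < r →
              ∀ x ∈ euSimplex m \ Metric.ball b r, ∀ y ∈ euSimplex m \ Metric.ball b r,
                dist (ρ x) (ρ y) ≤ (K / r) * dist x y := by
  refine ⟨16 * ((m : ℝ) + 1) + 2, by positivity, ?_⟩
  intro o ho hmax b hbΔ hbo ρ hρ r hr x hx y hy
  -- the boundary is nonempty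
  have hone : (1 : ℕ) < m + 1 := by omega
  have hbdryne : (euSimplexBdry m).Nonempty := by
    refine ⟨EuclideanSpace.single (0 : Fin (m + 1)) (1 : ℝ), ⟨⟨?_, ?_⟩, ?_⟩⟩
    · intro i
      rw [EuclideanSpace.single_apply]
      split <;> norm_num
    · simp [EuclideanSpace.single_apply]
    · refine ⟨⟨1, hone⟩, ?_⟩
      rw [EuclideanSpace.single_apply, if_neg]
      exact fun h => absurd (congrArg Fin.val h) (by norm_num)
  -- distance from the barycenter to the boundary is at least 1/(m+1)
  have hco : ((m : ℝ) + 1)⁻¹ ≤ Metric.infDist o (euSimplexBdry m) := by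
    set c : EuclideanSpace ℝ (Fin (m + 1)) := WithLp.toLp 2 (fun _ => ((m : ℝ) + 1)⁻¹) with hcdef
    have hcΔ : c ∈ euSimplex m := by
      constructor
      · intro i; positivity
      · simp [hcdef, Finset.sum_const, Finset.card_univ]
        rw [mul_inv_cancel₀]
        positivity
    have hcd : ((m : ℝ) + 1)⁻¹ ≤ Metric.infDist c (euSimplexBdry m) := by
      apply le_infDist_aux hbdryne (by positivity)
      intro z hz
      obtain ⟨i, hi⟩ := hz.2
      have := coord_abs_le_dist c z i
      rw [hi, sub_zero] at this
      have hc : c i = ((m : ℝ) + 1)⁻¹ := rfl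
      rw [hc, abs_of_nonneg (by positivity)] at this
      exact this
    exact hcd.trans (hmax c hcΔ)
  set δ0 : ℝ := Metric.infDist o (euSimplexBdry m) with hδ0def
  have hδ0pos : 0 < δ0 := lt_of_lt_of_le (by positivity) hco
  -- infDist b to the boundary is more than δ0/2
  have hbinf : δ0 / 2 < Metric.infDist b (euSimplexBdry m) := by
    have h1 : δ0 ≤ Metric.infDist b (euSimplexBdry m) + dist o b :=
      Metric.infDist_le_infDist_add_dist
    rw [dist_comm o b] at h1
    linarith
  -- all coordinates of b are at least 1/(4(m+1))
  have hbj : ∀ j, (4 * ((m : ℝ) + 1))⁻¹ ≤ b j := by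
    intro j
    -- pick k ≠ j
    have hk : ∃ k : Fin (m + 1), k ≠ j := by
      by_cases hj0 : j = 0
      · exact ⟨⟨1, hone⟩, fun h => absurd (congrArg Fin.val (h.trans hj0)) (by norm_num)⟩
      · exact ⟨0, fun h => hj0 h.symm⟩
    obtain ⟨k, hk⟩ := hk
    set b' : EuclideanSpace ℝ (Fin (m + 1)) :=
      b + (b j) • (EuclideanSpace.single k (1 : ℝ) - EuclideanSpace.single j (1 : ℝ))
      with hb'def
    have hb'app : ∀ i, b' i = b i + (b j) *
        ((if i = k then (1 : ℝ) else 0) - (if i = j then (1 : ℝ) else 0)) := by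
      intro i
      simp [hb'def, PiLp.add_apply, PiLp.smul_apply, PiLp.sub_apply,
        EuclideanSpace.single_apply, smul_eq_mul]
    have hb'j : b' j = 0 := by
      rw [hb'app j, if_neg (fun h => hk h.symm), if_pos rfl]
      ring
    have hb'bdry : b' ∈ euSimplexBdry m := by
      refine ⟨⟨?_, ?_⟩, ⟨j, hb'j⟩⟩
      · intro i
        rw [hb'app i]
        by_cases hik : i = k
        · rw [if_pos hik, if_neg (by rw [hik]; exact hk)]
          have := hbΔ.1 i
          have := hbΔ.1 j
          nlinarith
        · rw [if_neg hik]
          by_cases hij : i = j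
          · rw [if_pos hij, hij]; ring_nf; nlinarith [hbΔ.1 j]
          · rw [if_neg hij]
            have := hbΔ.1 i
            linarith
      · calc ∑ i, b' i
            = ∑ i, (b i + (b j) *
              ((if i = k then (1 : ℝ) else 0) - if i = j then (1 : ℝ) else 0)) :=
              Finset.sum_congr rfl fun i _ => hb'app i
          _ = 1 := by
              rw [Finset.sum_add_distrib, hbΔ.2, ← Finset.mul_sum, Finset.sum_sub_distrib]
              simp
    have hdist : dist b b' ≤ 2 * b j := by
      rw [hb'def, dist_eq_norm]
      have : b - (b + (b j) • (EuclideanSpace.single k (1 : ℝ)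
          - EuclideanSpace.single j (1 : ℝ)))
          = (-(b j)) • (EuclideanSpace.single k (1 : ℝ) - EuclideanSpace.single j (1 : ℝ)) := by
        rw [neg_smul]; abel
      rw [this, norm_smul, Real.norm_eq_abs, abs_neg, abs_of_nonneg (hbΔ.1 j)]
      have hn : ‖EuclideanSpace.single k (1 : ℝ) - EuclideanSpace.single j (1 : ℝ)‖ ≤ 2 := by
        calc ‖EuclideanSpace.single k (1 : ℝ) - EuclideanSpace.single j (1 : ℝ)‖
            ≤ ‖EuclideanSpace.single k (1 : ℝ)‖ + ‖EuclideanSpace.single j (1 : ℝ)‖ :=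
              norm_sub_le _ _
          _ ≤ 2 := by rw [EuclideanSpace.norm_single, EuclideanSpace.norm_single]; norm_num
      nlinarith [hbΔ.1 j]
    have h1 : Metric.infDist b (euSimplexBdry m) ≤ 2 * b j :=
      (Metric.infDist_le_dist_of_mem hb'bdry).trans hdist
    have h2 : ((m : ℝ) + 1)⁻¹ / 2 ≤ δ0 / 2 := by linarith
    have h3 : ((m : ℝ) + 1)⁻¹ / 2 < 2 * b j := lt_of_le_of_lt h2 (hbinf.trans_le h1)
    have hm1 : (0 : ℝ) < (m : ℝ) + 1 := by positivity
    rw [mul_inv]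
    linarith
  -- unpack x and y
  obtain ⟨hxΔ, hxb⟩ := hx
  obtain ⟨hyΔ, hyb⟩ := hy
  have hxr : r ≤ dist x b := not_lt.1 (fun h => hxb (Metric.mem_ball.2 h))
  have hyr : r ≤ dist y b := not_lt.1 (fun h => hyb (Metric.mem_ball.2 h))
  have hxne : x ≠ b := by
    intro h; rw [h, dist_self] at hxr; linarith
  have hyne : y ≠ b := by
    intro h; rw [h, dist_self] at hyr; linarith
  obtain ⟨hpx, s, hs0, hsx⟩ := hρ x ⟨hxΔ, hxne⟩
  obtain ⟨hpy, t, ht0, hty⟩ := hρ y ⟨hyΔ, hyne⟩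
  rcases le_total s t with hst | hst
  · exact radial_aux m b x y (ρ x) (ρ y) hbΔ hbj hpx hpy s t hs0 hst hsx hty r hr hxr
  · rw [dist_comm (ρ x) (ρ y), dist_comm x y]
    exact radial_aux m b y x (ρ y) (ρ x) hbΔ hbj hpy hpx t s ht0 hst hty hsx r hr hyr
end
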